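/- Let b ≥ 2 and r ≥ 1 be integers, and let r' = log(b)/log(a) for integers 2 ≤ a < b with a dividing b; define the sequence (e_k) by e_1 = 1 and e_k = ⌈r'·e_{k-1}⌉ for k ≥ 2, where r' = log(b)/log(a). Then for every k ≥ 1, e_k < r'^k / (r' − 1). -/
import Mathlib

theorem stmt_18 (a b : ℕ) (ha : 2 ≤ a) (hab : a < b) (hdvd : a ∣ b)
    (r' : ℝ) (hr' : r' = Real.log b / Real.log a)
    (e : ℕ → ℕ) (he1 : e 1 = 1)
    (hstep : ∀ k ≥ 2, e k = ⌈r' * (e (k - 1) : ℝ)⌉₊) :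
    ∀ k : ℕ, 1 ≤ k → (e k : ℝ) < r' ^ k / (r' - 1) := by
  have ha1 : (1:ℝ) < a := by exact_mod_cast lt_of_lt_of_le one_lt_two ha
  have hloga : 0 < Real.log a := Real.log_pos ha1
  have hr1 : 1 < r' := by
    rw [hr', lt_div_iff₀ hloga, one_mul]
    exact Real.log_lt_log (by positivity) (by exact_mod_cast hab)
  have hr0 : (0:ℝ) < r' - 1 := by linarith
  have hrpos : (0:ℝ) < r' := by linarith
  have key : ∀ k, 1 ≤ k → (e k : ℝ) ≤ (r' ^ k - 1) / (r' - 1) := by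
    intro k hk
    induction k with
    | zero => omega
    | succ n ih =>
      rcases Nat.lt_or_ge n 1 with h | h
      · interval_cases n
        rw [he1, pow_one]
        rw [div_self (ne_of_gt hr0)]
        norm_num
      · have hn := ih h
        have hk2 : 2 ≤ n + 1 := by omega
        rw [hstep (n+1) hk2]
        simp only [Nat.add_sub_cancel]
        have hceil : (⌈r' * (e n : ℝ)⌉₊ : ℝ) < r' * e n + 1 :=
          Nat.ceil_lt_add_one (mul_nonneg hrpos.le (Nat.cast_nonneg _))
        have hmul : r' * (e n : ℝ) ≤ r' * ((r'^n - 1)/(r'-1)) :=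
          mul_le_mul_of_nonneg_left hn hrpos.le
        have heq : r' * ((r'^n - 1)/(r'-1)) + 1 = (r' ^ (n+1) - 1)/(r'-1) := by
          field_simp
          ring
        linarith
  intro k hk
  have h1 := key k hk
  have h2 : (r'^k - 1)/(r'-1) < r'^k/(r'-1) := by
    exact div_lt_div_of_pos_right (by linarith) hr0
  linarith
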